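/- Let s be a fixed complex parameter with 12s² ≠ 1, s ≠ 0, and define x(t) = t² and y(t) = 4(144s²t² + 4s² + 32st + 4t² + 1)(4s² + 1)(s+t)s / ((12s² - 1)³ t²) for t ≠ 0. Then, denoting by ẋ and ẏ the derivatives with respect to t, the identity (3xy² - 4xy - y² + y)ẋ² + (-12x²y + 8x² - 2xy + 2x)ẋẏ + (12x³ - x²)ẏ² = 0 holds identically in t (for all t ≠ 0 where all expressions are defined). -/
import Mathlib

set_option maxHeartbeats 4000000

private lemma horn_quadratic_aux (x xd N M D2 D3 : ℂ) (hD2 : D2 ≠ 0) (hD3 : D3 ≠ 0)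
    (hP : (3 * x * N ^ 2 - 4 * x * N * D2 - N ^ 2 + N * D2) * xd ^ 2 * D3 ^ 2
        + (-12 * x ^ 2 * N + 8 * x ^ 2 * D2 - 2 * x * N + 2 * x * D2) * xd * M * D2 * D3
        + (12 * x ^ 3 - x ^ 2) * M ^ 2 * D2 ^ 2 = 0) :
    (3 * x * (N / D2) ^ 2 - 4 * x * (N / D2) - (N / D2) ^ 2 + N / D2) * xd ^ 2
      + (-12 * x ^ 2 * (N / D2) + 8 * x ^ 2 - 2 * x * (N / D2) + 2 * x) * xd * (M / D3)
      + (12 * x ^ 3 - x ^ 2) * (M / D3) ^ 2 = 0 := by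
  obtain ⟨Y, hY⟩ : ∃ Y, N / D2 = Y := ⟨_, rfl⟩
  obtain ⟨Z, hZ⟩ : ∃ Z, M / D3 = Z := ⟨_, rfl⟩
  have hN : N = Y * D2 := by rw [← hY, div_mul_cancel₀ _ hD2]
  have hM : M = Z * D3 := by rw [← hZ, div_mul_cancel₀ _ hD3]
  rw [hY, hZ]
  rw [hN, hM] at hP
  have key : ((3 * x * Y ^ 2 - 4 * x * Y - Y ^ 2 + Y) * xd ^ 2
      + (-12 * x ^ 2 * Y + 8 * x ^ 2 - 2 * x * Y + 2 * x) * xd * Z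
      + (12 * x ^ 3 - x ^ 2) * Z ^ 2) * (D2 ^ 2 * D3 ^ 2) = 0 := by
    linear_combination hP
  have h2 : D2 ^ 2 * D3 ^ 2 ≠ 0 := mul_ne_zero (pow_ne_zero _ hD2) (pow_ne_zero _ hD3)
  exact (mul_eq_zero.mp key).resolve_right h2

/-- The parametrization `x(t) = t²` of the first argument of Horn's `H₅`. -/
noncomputable def xH5 (t : ℂ) : ℂ := t ^ 2

/-- The parametrization `y(t)` of the second argument of Horn's `H₅`
(for a fixed parameter `s`). -/
noncomputable def yH5 (s t : ℂ) : ℂ :=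
  4 * (144 * s ^ 2 * t ^ 2 + 4 * s ^ 2 + 32 * s * t + 4 * t ^ 2 + 1) *
    (4 * s ^ 2 + 1) * (s + t) * s / ((12 * s ^ 2 - 1) ^ 3 * t ^ 2)

/-- For fixed `s` with `12s² ≠ 1`, `s ≠ 0`, and the curves `x(t) = t²`,
`y(t) = 4(144s²t²+4s²+32st+4t²+1)(4s²+1)(s+t)s/((12s²-1)³t²)`, the numerator of the
coefficient of `F_yy` in the reduction of the `H₅` system vanishes identically:
`(3xy²-4xy-y²+y)ẋ² + (-12x²y+8x²-2xy+2x)ẋẏ + (12x³-x²)ẏ² = 0` for all `t ≠ 0`. -/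
theorem hornH5_Fyy_coefficient_vanishes (s : ℂ) (hs : 12 * s ^ 2 ≠ 1) (hs0 : s ≠ 0)
    (t : ℂ) (ht : t ≠ 0) :
    (3 * xH5 t * (yH5 s t) ^ 2 - 4 * xH5 t * yH5 s t - (yH5 s t) ^ 2 + yH5 s t) *
        (deriv xH5 t) ^ 2
      + (-12 * (xH5 t) ^ 2 * yH5 s t + 8 * (xH5 t) ^ 2 - 2 * xH5 t * yH5 s t
          + 2 * xH5 t) * deriv xH5 t * deriv (yH5 s) t
      + (12 * (xH5 t) ^ 3 - (xH5 t) ^ 2) * (deriv (yH5 s) t) ^ 2 = 0 := by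
  have hd : (12 * s ^ 2 - 1 : ℂ) ≠ 0 := sub_ne_zero.mpr hs
  have h2 : HasDerivAt (fun u : ℂ => u ^ 2) (2 * t) t := by
    simpa using hasDerivAt_pow 2 t
  have hx : deriv xH5 t = 2 * t := by
    have : HasDerivAt xH5 (2 * t) t := h2
    exact this.deriv
  have hQ : HasDerivAt (fun u : ℂ => 144 * s ^ 2 * u ^ 2 + 4 * s ^ 2 + 32 * s * u
      + 4 * u ^ 2 + 1) (144 * s ^ 2 * (2 * t) + 32 * s * 1 + 4 * (2 * t)) t := by
    have hid : HasDerivAt (fun u : ℂ => u) 1 t := hasDerivAt_id t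
    simpa using ((((h2.const_mul (144 * s ^ 2)).add_const (4 * s ^ 2)).add
      (hid.const_mul (32 * s))).add (h2.const_mul 4)).add_const 1
  have hC : HasDerivAt (fun u : ℂ => s + u) 1 t := by
    simpa using (hasDerivAt_id t).const_add s
  have hN : HasDerivAt (fun u : ℂ => 4 * (144 * s ^ 2 * u ^ 2 + 4 * s ^ 2 + 32 * s * u
      + 4 * u ^ 2 + 1) * (4 * s ^ 2 + 1) * (s + u) * s)
      (((4 * (144 * s ^ 2 * (2 * t) + 32 * s * 1 + 4 * (2 * t)) * (4 * s ^ 2 + 1)) * (s + t)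
        + (4 * (144 * s ^ 2 * t ^ 2 + 4 * s ^ 2 + 32 * s * t + 4 * t ^ 2 + 1)
            * (4 * s ^ 2 + 1)) * 1) * s) t := by
    exact (((hQ.const_mul 4).mul_const (4 * s ^ 2 + 1)).mul hC).mul_const s
  have hD : HasDerivAt (fun u : ℂ => (12 * s ^ 2 - 1) ^ 3 * u ^ 2)
      ((12 * s ^ 2 - 1) ^ 3 * (2 * t)) t := h2.const_mul _
  have hDne : (12 * s ^ 2 - 1) ^ 3 * t ^ 2 ≠ 0 := by
    exact mul_ne_zero (pow_ne_zero _ hd) (pow_ne_zero _ ht)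
  have hy : HasDerivAt (yH5 s)
      (((((4 * (144 * s ^ 2 * (2 * t) + 32 * s * 1 + 4 * (2 * t)) * (4 * s ^ 2 + 1)) * (s + t)
        + (4 * (144 * s ^ 2 * t ^ 2 + 4 * s ^ 2 + 32 * s * t + 4 * t ^ 2 + 1)
            * (4 * s ^ 2 + 1)) * 1) * s) * ((12 * s ^ 2 - 1) ^ 3 * t ^ 2)
        - (4 * (144 * s ^ 2 * t ^ 2 + 4 * s ^ 2 + 32 * s * t + 4 * t ^ 2 + 1)
            * (4 * s ^ 2 + 1) * (s + t) * s) * ((12 * s ^ 2 - 1) ^ 3 * (2 * t)))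
        / ((12 * s ^ 2 - 1) ^ 3 * t ^ 2) ^ 2) t := hN.div hD hDne
  have hyd : deriv (yH5 s) t =
      (((4 * (288 * s ^ 2 * t + 32 * s + 8 * t) * (4 * s ^ 2 + 1) * (s + t)
          + 4 * (144 * s ^ 2 * t ^ 2 + 4 * s ^ 2 + 32 * s * t + 4 * t ^ 2 + 1)
              * (4 * s ^ 2 + 1)) * s) * t
        - 2 * (4 * (144 * s ^ 2 * t ^ 2 + 4 * s ^ 2 + 32 * s * t + 4 * t ^ 2 + 1)
            * (4 * s ^ 2 + 1) * (s + t) * s)) / ((12 * s ^ 2 - 1) ^ 3 * t ^ 3) := by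
    rw [hy.deriv]
    have h3 : ((12 : ℂ) * s ^ 2 - 1) ^ 3 ≠ 0 := pow_ne_zero _ hd
    field_simp
    ring
  rw [hyd, hx]
  have hyv : yH5 s t = (4 * (144 * s ^ 2 * t ^ 2 + 4 * s ^ 2 + 32 * s * t + 4 * t ^ 2 + 1) *
      (4 * s ^ 2 + 1) * (s + t) * s) / ((12 * s ^ 2 - 1) ^ 3 * t ^ 2) := rfl
  rw [hyv]
  simp only [xH5]
  have h3 : ((12 : ℂ) * s ^ 2 - 1) ^ 3 ≠ 0 := pow_ne_zero _ hd
  exact horn_quadratic_aux _ _ _ _ _ _ (mul_ne_zero h3 (pow_ne_zero _ ht))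
    (mul_ne_zero h3 (pow_ne_zero _ ht)) (by ring)
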